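/- Let n be a positive integer. For 1 ≤ i ≤ n let φ^n_i denote the kV₄-module endomorphism of M_n sending a_i to b_1 and all other basis elements a_j (j ≠ i) and b_j to zero. If scalars α_1, …, α_n ∈ k are such that the endomorphism ∑_{i=1}^n α_i φ^n_i factors through a projective kV₄-module, then α_i = 0 for all i; that is, the classes of φ^n_1, …, φ^n_n are linearly independent in the stable endomorphism algebra of M_n. -/

import Mathlib

universe u v w

/-- A homomorphism of `A`-modules factors through a projective `A`-module. -/
def FactorsThroughProjective {A : Type u} [Ring A] {M : Type v} {N : Type w}
    [AddCommGroup M] [Module A M] [AddCommGroup N] [Module A N]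
    (φ : M →ₗ[A] N) : Prop :=
  ∃ (Q : ModuleCat.{max u v w} A) (f : M →ₗ[A] Q) (g : Q →ₗ[A] N),
    Module.Projective A Q ∧ g ∘ₗ f = φ

/-- The Klein four group. -/
abbrev V4 : Type := Multiplicative (ZMod 2 × ZMod 2)

/-- The first generator `s` of the Klein four group. -/
def sV4 : V4 := Multiplicative.ofAdd (1, 0)

/-- The second generator `t` of the Klein four group. -/
def tV4 : V4 := Multiplicative.ofAdd (0, 1)


noncomputable def eA (k : Type) [Field k] : MonoidAlgebra k V4 →ₗ[k] MonoidAlgebra k V4 where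
  toFun a := MonoidAlgebra.single 1 (a.coeff 1)
  map_add' a b := by
    classical
    show MonoidAlgebra.single 1 ((a + b).coeff 1) = _
    rw [show ((a+b).coeff 1 : k) = a.coeff 1 + b.coeff 1 from rfl, MonoidAlgebra.single_add]
  map_smul' c a := by
    classical
    show MonoidAlgebra.single 1 ((c • a).coeff 1) = c • MonoidAlgebra.single 1 (a.coeff 1)
    rw [show ((c • a).coeff 1 : k) = c • a.coeff 1 from rfl, MonoidAlgebra.smul_single']
    rw [smul_eq_mul]

theorem eA_single (k : Type) [Field k] (w : V4) (c : k) :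
    eA k (MonoidAlgebra.single w c) = MonoidAlgebra.single 1 (if w = 1 then c else 0) := by
  classical
  simp [eA, MonoidAlgebra.coeff_single, Finsupp.single_apply]

theorem traceA (k : Type) [Field k] (a : MonoidAlgebra k V4) :
    ∑ g : V4, MonoidAlgebra.of k V4 g * eA k (MonoidAlgebra.of k V4 g * a) = a := by
  classical
  induction a using MonoidAlgebra.induction_on with
  | of h =>
    have key : ∀ g h' : V4, g * h' = 1 ↔ g = h' := by decide
    simp only [MonoidAlgebra.of_apply, MonoidAlgebra.single_mul_single, one_mul, eA_single, key,
      mul_one]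
    rw [Finset.sum_eq_single h (fun g _ hgh => by simp [hgh]) (fun h' => absurd (Finset.mem_univ h) h')]
    simp
  | add f g hf hg =>
    simp only [mul_add, map_add]
    rw [Finset.sum_add_distrib, hf, hg]
  | smul r f hf =>
    simp only [mul_smul_comm, map_smul, smul_comm r, ← Finset.smul_sum, hf]


theorem traceFinsupp (k : Type) [Field k] (Q : Type) (v : Q →₀ MonoidAlgebra k V4) :
    ∑ g : V4, MonoidAlgebra.of k V4 g •
      (Finsupp.mapRange.linearMap (eA k)) (MonoidAlgebra.of k V4 g • v) = v := by
  classical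
  induction v using Finsupp.induction_linear with
  | zero => simp
  | add f g hf hg =>
    simp only [smul_add, map_add]
    rw [Finset.sum_add_distrib, hf, hg]
  | single q a =>
    have h1 : ∀ g : V4, MonoidAlgebra.of k V4 g • Finsupp.single q a
        = Finsupp.single q (MonoidAlgebra.of k V4 g * a) := by
      intro g; rw [Finsupp.smul_single, smul_eq_mul]
    simp only [h1, Finsupp.mapRange.linearMap_apply, Finsupp.mapRange_single]
    calc ∑ g : V4, MonoidAlgebra.of k V4 g •
          Finsupp.single q (eA k (MonoidAlgebra.of k V4 g * a))
        = ∑ g : V4, Finsupp.single q (MonoidAlgebra.of k V4 g * eA k (MonoidAlgebra.of k V4 g * a)) := by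
          refine Finset.sum_congr rfl fun g _ => ?_
          rw [Finsupp.smul_single, smul_eq_mul]
      _ = Finsupp.single q (∑ g : V4, MonoidAlgebra.of k V4 g * eA k (MonoidAlgebra.of k V4 g * a)) := by
          rw [Finsupp.single_finset_sum]
      _ = Finsupp.single q a := by rw [traceA]

set_option linter.unusedSectionVars false

noncomputable def smulLM {k A M : Type} [CommSemiring k] [Ring A] [AddCommGroup M]
    [Module k M] [Module A M] [SMulCommClass A k M] (a : A) : M →ₗ[k] M where
  toFun v := a • v
  map_add' := smul_add a
  map_smul' c v := smul_comm a c v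

theorem smulLM_apply {k A M : Type} [CommSemiring k] [Ring A] [AddCommGroup M]
    [Module k M] [Module A M] [SMulCommClass A k M] (a : A) (v : M) :
    smulLM (k := k) a v = a • v := rfl

section Klein

def IsKleinModuleBasis' (k : Type) [Field k] (n : ℕ) (M : Type) [AddCommGroup M]
    [Module k M] [Module (MonoidAlgebra k V4) M]
    [IsScalarTower k (MonoidAlgebra k V4) M]
    (B : Module.Basis (Fin n ⊕ Fin n) k M) : Prop :=
  (∀ i : Fin n, (MonoidAlgebra.of k V4 sV4 - 1) • B (Sum.inl i) = B (Sum.inr i)) ∧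
  (∀ (i : Fin n) (h : (i : ℕ) + 1 < n),
      (MonoidAlgebra.of k V4 tV4 - 1) • B (Sum.inl i) = B (Sum.inr ⟨(i : ℕ) + 1, h⟩)) ∧
  (∀ i : Fin n, (i : ℕ) + 1 = n → (MonoidAlgebra.of k V4 tV4 - 1) • B (Sum.inl i) = 0) ∧
  (∀ i : Fin n, (MonoidAlgebra.of k V4 sV4 - 1) • B (Sum.inr i) = 0) ∧
  (∀ i : Fin n, (MonoidAlgebra.of k V4 tV4 - 1) • B (Sum.inr i) = 0)

variable {k : Type} [Field k] {n : ℕ} {M : Type} [AddCommGroup M] [Module k M]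
  [Module (MonoidAlgebra k V4) M] [IsScalarTower k (MonoidAlgebra k V4) M]
  [SMulCommClass (MonoidAlgebra k V4) k M]
  (B : Module.Basis (Fin n ⊕ Fin n) k M)

noncomputable def padA (j : ℕ) : M := if h : j < n then B (Sum.inl ⟨j, h⟩) else 0
noncomputable def padB (j : ℕ) : M := if h : j < n then B (Sum.inr ⟨j, h⟩) else 0
noncomputable def pcf (v : M) (j : ℕ) : k := if h : j < n then B.repr v (Sum.inl ⟨j, h⟩) else 0
noncomputable def qcf (v : M) (j : ℕ) : k := if h : j < n then B.repr v (Sum.inr ⟨j, h⟩) else 0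

variable {B}

theorem padB_out {j : ℕ} (h : n ≤ j) : padB B j = 0 := dif_neg (by omega)

theorem padA_lt {j : ℕ} (h : j < n) : padA B j = B (Sum.inl ⟨j, h⟩) := dif_pos h

theorem pcf_add (u v : M) (j : ℕ) : pcf B (u + v) j = pcf B u j + pcf B v j := by
  unfold pcf; split <;> simp

theorem qcf_add (u v : M) (j : ℕ) : qcf B (u + v) j = qcf B u j + qcf B v j := by
  unfold qcf; split <;> simp

theorem pcf_zero (j : ℕ) : pcf B (0 : M) j = 0 := by unfold pcf; split <;> simp

theorem qcf_zero (j : ℕ) : qcf B (0 : M) j = 0 := by unfold qcf; split <;> simp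

theorem qcf_smul (c : k) (u : M) (j : ℕ) : qcf B (c • u) j = c * qcf B u j := by
  unfold qcf; split <;> simp

theorem qcf_padB_zero (j : ℕ) (l : ℕ) (hne : j ≠ l) : qcf B (padB B j) l = 0 := by
  unfold qcf padB
  split
  case isTrue h =>
    split
    case isTrue h2 =>
      simp only [Module.Basis.repr_self, Finsupp.single_apply, Sum.inr.injEq, Fin.ext_iff, Fin.val_mk]
      split_ifs <;> first | rfl | omega
    case isFalse h2 => simp
  case isFalse h => rfl

theorem qcf_padB_self (j : ℕ) (hj : j < n) : qcf B (padB B j) j = 1 := by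
  unfold qcf padB
  rw [dif_pos hj, dif_pos hj]
  simp [Module.Basis.repr_self]

variable (hB : IsKleinModuleBasis' k n M B)
include hB

theorem x_padA (j : ℕ) : (MonoidAlgebra.of k V4 sV4 - 1) • padA B j = padB B j := by
  unfold padA padB; split
  · exact hB.1 _
  · simp

theorem y_padA (j : ℕ) : (MonoidAlgebra.of k V4 tV4 - 1) • padA B j = padB B (j + 1) := by
  unfold padA padB
  rcases lt_or_ge j n with hj | hj
  · rw [dif_pos hj]
    rcases lt_or_ge (j+1) n with hj1 | hj1
    · rw [dif_pos hj1]; exact hB.2.1 ⟨j, hj⟩ hj1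
    · rw [dif_neg (by omega)]; exact hB.2.2.1 ⟨j, hj⟩ (by simp only [Fin.val_mk]; omega)
  · rw [dif_neg (by omega), dif_neg (by omega), smul_zero]

theorem x_padB (j : ℕ) : (MonoidAlgebra.of k V4 sV4 - 1) • padB B j = 0 := by
  unfold padB; split
  · exact hB.2.2.2.1 _
  · simp

theorem y_padB (j : ℕ) : (MonoidAlgebra.of k V4 tV4 - 1) • padB B j = 0 := by
  unfold padB; split
  · exact hB.2.2.2.2 _
  · simp

theorem qcf_x (u : M) (j : ℕ) :
    qcf B ((MonoidAlgebra.of k V4 sV4 - 1) • u) j = pcf B u j := by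
  unfold qcf pcf
  split
  case isTrue h =>
    have key : (B.coord (Sum.inr ⟨j, h⟩)) ∘ₗ
        (smulLM (MonoidAlgebra.of k V4 sV4 - 1) : M →ₗ[k] M) = B.coord (Sum.inl ⟨j, h⟩) := by
      refine B.ext ?_
      rintro (jj | jj)
      · simp only [LinearMap.comp_apply, smulLM_apply, Module.Basis.coord_apply]
        rw [hB.1 jj]
        simp [Module.Basis.repr_self, Finsupp.single_apply, Fin.ext_iff, Fin.val_mk]
      · simp only [LinearMap.comp_apply, smulLM_apply, Module.Basis.coord_apply]
        rw [hB.2.2.2.1 jj]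
        simp [Module.Basis.repr_self, Finsupp.single_apply]
    exact LinearMap.congr_fun key u
  case isFalse h => rfl

theorem pcf_x (u : M) (j : ℕ) :
    pcf B ((MonoidAlgebra.of k V4 sV4 - 1) • u) j = 0 := by
  unfold pcf
  split
  case isTrue h =>
    have key : (B.coord (Sum.inl ⟨j, h⟩)) ∘ₗ
        (smulLM (MonoidAlgebra.of k V4 sV4 - 1) : M →ₗ[k] M) = 0 := by
      refine B.ext ?_
      rintro (jj | jj)
      · simp only [LinearMap.comp_apply, smulLM_apply, Module.Basis.coord_apply]
        rw [hB.1 jj]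
        simp [Module.Basis.repr_self, Finsupp.single_apply]
      · simp only [LinearMap.comp_apply, smulLM_apply, Module.Basis.coord_apply]
        rw [hB.2.2.2.1 jj]
        simp
    exact LinearMap.congr_fun key u
  case isFalse h => rfl

theorem pcf_y (u : M) (j : ℕ) :
    pcf B ((MonoidAlgebra.of k V4 tV4 - 1) • u) j = 0 := by
  unfold pcf
  split
  case isTrue h =>
    have key : (B.coord (Sum.inl ⟨j, h⟩)) ∘ₗ
        (smulLM (MonoidAlgebra.of k V4 tV4 - 1) : M →ₗ[k] M) = 0 := by
      refine B.ext ?_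
      rintro (jj | jj)
      · simp only [LinearMap.comp_apply, smulLM_apply, Module.Basis.coord_apply]
        have hy := y_padA hB (jj : ℕ)
        rw [padA_lt jj.isLt] at hy
        rw [Fin.eta] at hy
        rw [hy]
        unfold padB
        split
        · simp [Module.Basis.repr_self, Finsupp.single_apply]
        · simp
      · simp only [LinearMap.comp_apply, smulLM_apply, Module.Basis.coord_apply]
        rw [hB.2.2.2.2 jj]
        simp
    exact LinearMap.congr_fun key u
  case isFalse h => rfl

theorem qcf_y (u : M) (j : ℕ) (hj : j < n) :
    qcf B ((MonoidAlgebra.of k V4 tV4 - 1) • u) j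
      = if 1 ≤ j then pcf B u (j - 1) else 0 := by
  unfold qcf pcf
  rw [dif_pos hj]
  by_cases h1 : 1 ≤ j
  · rw [if_pos h1, dif_pos (show j - 1 < n by omega)]
    have key : (B.coord (Sum.inr ⟨j, hj⟩)) ∘ₗ
        (smulLM (MonoidAlgebra.of k V4 tV4 - 1) : M →ₗ[k] M)
          = B.coord (Sum.inl ⟨j - 1, by omega⟩) := by
      refine B.ext ?_
      rintro (jj | jj)
      · simp only [LinearMap.comp_apply, smulLM_apply, Module.Basis.coord_apply]
        have hy := y_padA hB (jj : ℕ)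
        rw [padA_lt jj.isLt, Fin.eta] at hy
        rw [hy]
        unfold padB
        split
        case isTrue hlt =>
          simp only [Module.Basis.repr_self, Finsupp.single_apply, Sum.inr.injEq, Sum.inl.injEq,
            Fin.ext_iff, Fin.val_mk]
          split_ifs <;> first | rfl | omega
        case isFalse hge =>
          simp only [map_zero, Finsupp.coe_zero, Pi.zero_apply, Module.Basis.repr_self,
            Finsupp.single_apply, Sum.inl.injEq, Fin.ext_iff, Fin.val_mk]
          split_ifs <;> first | rfl | omega
      · simp only [LinearMap.comp_apply, smulLM_apply, Module.Basis.coord_apply]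
        rw [hB.2.2.2.2 jj]
        simp [Module.Basis.repr_self, Finsupp.single_apply]
    exact LinearMap.congr_fun key u
  · rw [if_neg h1]
    have hj0 : j = 0 := by omega
    subst hj0
    have key : (B.coord (Sum.inr ⟨0, hj⟩)) ∘ₗ
        (smulLM (MonoidAlgebra.of k V4 tV4 - 1) : M →ₗ[k] M) = 0 := by
      refine B.ext ?_
      rintro (jj | jj)
      · simp only [LinearMap.comp_apply, smulLM_apply, Module.Basis.coord_apply]
        have hy := y_padA hB (jj : ℕ)
        rw [padA_lt jj.isLt, Fin.eta] at hy
        rw [hy]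
        unfold padB
        split
        case isTrue hlt =>
          simp only [Module.Basis.repr_self, Finsupp.single_apply, Sum.inr.injEq, Fin.ext_iff, Fin.val_mk,
            LinearMap.zero_apply]
          rw [if_neg (by omega)]
        case isFalse hge => simp
      · simp only [LinearMap.comp_apply, smulLM_apply, Module.Basis.coord_apply]
        rw [hB.2.2.2.2 jj]
        simp
    exact LinearMap.congr_fun key u

end Klein

/-- `B` is a `k`-basis `a_1,…,a_n,b_1,…,b_n` of the `kV₄`-module `M` on which
`x = s - 1` and `y = t - 1` act by `x·a_i = b_i`, `y·a_i = b_{i+1}` (`i < n`),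
`y·a_n = 0`, `x·b_i = y·b_i = 0`; i.e. `M` is the module `M_n`. -/
def IsKleinModuleBasis (k : Type) [Field k] (n : ℕ) (M : Type) [AddCommGroup M]
    [Module k M] [Module (MonoidAlgebra k V4) M]
    [IsScalarTower k (MonoidAlgebra k V4) M]
    (B : Module.Basis (Fin n ⊕ Fin n) k M) : Prop :=
  (∀ i : Fin n, (MonoidAlgebra.of k V4 sV4 - 1) • B (Sum.inl i) = B (Sum.inr i)) ∧
  (∀ (i : Fin n) (h : (i : ℕ) + 1 < n),
      (MonoidAlgebra.of k V4 tV4 - 1) • B (Sum.inl i) = B (Sum.inr ⟨(i : ℕ) + 1, h⟩)) ∧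
  (∀ i : Fin n, (i : ℕ) + 1 = n → (MonoidAlgebra.of k V4 tV4 - 1) • B (Sum.inl i) = 0) ∧
  (∀ i : Fin n, (MonoidAlgebra.of k V4 sV4 - 1) • B (Sum.inr i) = 0) ∧
  (∀ i : Fin n, (MonoidAlgebra.of k V4 tV4 - 1) • B (Sum.inr i) = 0)

/-- If a `k`-linear combination of the endomorphisms `φ^n_i` of `M_n` (sending
`a_i ↦ b_1` and all other basis vectors to `0`) factors through a projective
module, then all coefficients vanish: the classes of the `φ^n_i` are linearly
independent in the stable endomorphism algebra of `M_n`. -/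
theorem stmt10 (k : Type) [Field k] [IsAlgClosed k] [CharP k 2]
    (n : ℕ) (hn : 0 < n)
    (M : Type) [AddCommGroup M] [Module k M] [Module (MonoidAlgebra k V4) M]
    [IsScalarTower k (MonoidAlgebra k V4) M]
    [SMulCommClass (MonoidAlgebra k V4) k M]
    (B : Module.Basis (Fin n ⊕ Fin n) k M) (hB : IsKleinModuleBasis k n M B)
    (φ : Fin n → (M →ₗ[MonoidAlgebra k V4] M))
    (hφa : ∀ i j : Fin n, φ i (B (Sum.inl j)) = if j = i then B (Sum.inr ⟨0, hn⟩) else 0)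
    (hφb : ∀ i j : Fin n, φ i (B (Sum.inr j)) = 0)
    (α : Fin n → k)
    (hfac : FactorsThroughProjective (∑ i : Fin n, α i • φ i)) :
    ∀ i : Fin n, α i = 0 := by
  classical
  have hB' : IsKleinModuleBasis' k n M B := hB
  obtain ⟨m1, rfl⟩ : ∃ m1, n = m1 + 1 := ⟨n - 1, by omega⟩
  intro i
  obtain ⟨Q, f, g, hQproj, hgf⟩ := hfac
  obtain ⟨sQ, hsQ⟩ := Module.projective_def'.mp hQproj
  set Φ : M →ₗ[MonoidAlgebra k V4] M := ∑ i' : Fin (m1+1), α i' • φ i' with hΦdef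
  set F : M →ₗ[MonoidAlgebra k V4] (Q →₀ MonoidAlgebra k V4) := sQ ∘ₗ f with hFdef
  set G : (Q →₀ MonoidAlgebra k V4) →ₗ[MonoidAlgebra k V4] M :=
    g ∘ₗ (Finsupp.linearCombination (MonoidAlgebra k V4) id) with hGdef
  have hGF : ∀ m : M, G (F m) = Φ m := by
    intro m
    have h1 : (Finsupp.linearCombination (MonoidAlgebra k V4) id) (sQ (f m)) = f m :=
      LinearMap.congr_fun hsQ (f m)
    show g ((Finsupp.linearCombination (MonoidAlgebra k V4) id) (sQ (f m))) = Φ m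
    rw [h1]
    exact LinearMap.congr_fun hgf m
  set ψ : M →ₗ[k] M :=
    (G.restrictScalars k) ∘ₗ (Finsupp.mapRange.linearMap (eA k)) ∘ₗ (F.restrictScalars k)
    with hψdef
  have key4 : ∀ m0 : M,
      Φ m0 = ∑ gg : V4, MonoidAlgebra.of k V4 gg • ψ (MonoidAlgebra.of k V4 gg • m0) := by
    intro m0
    have h2 : ∀ gg : V4, MonoidAlgebra.of k V4 gg • ψ (MonoidAlgebra.of k V4 gg • m0)
        = G (MonoidAlgebra.of k V4 gg •
            (Finsupp.mapRange.linearMap (eA k)) (MonoidAlgebra.of k V4 gg • F m0)) := by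
      intro gg
      have h3 : ψ (MonoidAlgebra.of k V4 gg • m0)
          = G ((Finsupp.mapRange.linearMap (eA k)) (F (MonoidAlgebra.of k V4 gg • m0))) := rfl
      rw [h3, map_smul F, ← map_smul G]
    rw [Finset.sum_congr rfl (fun gg _ => h2 gg), ← map_sum G, traceFinsupp k Q (F m0), hGF]
  -- basic action rewrites
  have hsm : ∀ u : M, MonoidAlgebra.of k V4 sV4 • u
      = u + (MonoidAlgebra.of k V4 sV4 - 1) • u := by
    intro u; rw [sub_smul, one_smul]; abel
  have htm : ∀ u : M, MonoidAlgebra.of k V4 tV4 • u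
      = u + (MonoidAlgebra.of k V4 tV4 - 1) • u := by
    intro u; rw [sub_smul, one_smul]; abel
  have hstm : ∀ u : M, MonoidAlgebra.of k V4 (sV4 * tV4) • u
      = MonoidAlgebra.of k V4 sV4 • (MonoidAlgebra.of k V4 tV4 • u) := by
    intro u; rw [map_mul, mul_smul]
  have htwo : (2 : k) = 0 := CharTwo.two_eq_zero
  -- the main pointwise formula
  have mainF : ∀ l : ℕ, l < m1 + 1 → qcf B (Φ (padA B (l + (i:ℕ)))) l
      = pcf B (ψ (padB B (l + (i:ℕ) + 1))) l
        + (if 1 ≤ l then pcf B (ψ (padB B (l + (i:ℕ)))) (l-1) else 0) := by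
    intro l hl
    by_cases hli : l + (i:ℕ) < m1 + 1
    · rw [key4 (padA B (l + (i:ℕ)))]
      rw [show (Finset.univ : Finset V4) = {1, sV4, tV4, sV4 * tV4} from by decide]
      rw [Finset.sum_insert (by decide), Finset.sum_insert (by decide),
        Finset.sum_insert (by decide), Finset.sum_singleton]
      have arg_t : MonoidAlgebra.of k V4 tV4 • padA B (l + (i:ℕ))
          = padA B (l + (i:ℕ)) + padB B (l + (i:ℕ) + 1) := by
        rw [htm, y_padA hB']
      have arg_s : MonoidAlgebra.of k V4 sV4 • padA B (l + (i:ℕ))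
          = padA B (l + (i:ℕ)) + padB B (l + (i:ℕ)) := by
        rw [hsm, x_padA hB']
      have arg_st : MonoidAlgebra.of k V4 (sV4 * tV4) • padA B (l + (i:ℕ))
          = padA B (l + (i:ℕ)) + padB B (l + (i:ℕ) + 1) + padB B (l + (i:ℕ)) := by
        rw [hstm, arg_t, hsm, smul_add, x_padA hB', x_padB hB']
        abel
      rw [map_one (MonoidAlgebra.of k V4), one_smul, one_smul, arg_s, arg_t, arg_st]
      rw [map_add ψ, map_add ψ, map_add ψ, map_add ψ]
      rw [hsm (ψ (padA B (l + (i:ℕ))) + ψ (padB B (l + (i:ℕ))))]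
      rw [htm (ψ (padA B (l + (i:ℕ))) + ψ (padB B (l + (i:ℕ) + 1)))]
      rw [hstm, htm, hsm]
      by_cases hl1 : 1 ≤ l
      · rw [if_pos hl1]
        simp only [qcf_add, pcf_add, smul_add, qcf_x hB', pcf_x hB', pcf_y hB',
          qcf_y hB' _ _ hl, if_pos hl1]
        linear_combination (2 * qcf B (ψ (padA B (l + (i:ℕ)))) l
          + qcf B (ψ (padB B (l + (i:ℕ)))) l + qcf B (ψ (padB B (l + (i:ℕ) + 1))) l
          + pcf B (ψ (padA B (l + (i:ℕ)))) l + pcf B (ψ (padB B (l + (i:ℕ)))) l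
          + pcf B (ψ (padA B (l + (i:ℕ)))) (l-1) + pcf B (ψ (padB B (l + (i:ℕ) + 1))) (l-1)) * htwo
      · rw [if_neg hl1]
        simp only [qcf_add, pcf_add, smul_add, qcf_x hB', pcf_x hB', pcf_y hB',
          qcf_y hB' _ _ hl, if_neg hl1]
        linear_combination (2 * qcf B (ψ (padA B (l + (i:ℕ)))) l
          + qcf B (ψ (padB B (l + (i:ℕ)))) l + qcf B (ψ (padB B (l + (i:ℕ) + 1))) l
          + pcf B (ψ (padA B (l + (i:ℕ)))) l + pcf B (ψ (padB B (l + (i:ℕ)))) l) * htwo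
    · rw [show padA B (l + (i:ℕ)) = 0 from dif_neg (by omega), map_zero, qcf_zero,
        padB_out (by omega), padB_out (show m1 + 1 ≤ l + (i:ℕ) by omega), map_zero, pcf_zero]
      simp [pcf_zero, map_zero]
  -- value computation
  have hΦa : ∀ jf : Fin (m1+1), Φ (B (Sum.inl jf)) = α jf • B (Sum.inr ⟨0, hn⟩) := by
    intro jf
    rw [hΦdef, LinearMap.sum_apply]
    have hterm : ∀ i' : Fin (m1+1), (α i' • φ i') (B (Sum.inl jf))
        = if jf = i' then α i' • B (Sum.inr ⟨0, hn⟩) else 0 := by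
      intro i'
      rw [LinearMap.smul_apply, hφa i' jf]
      split <;> simp
    rw [Finset.sum_congr rfl (fun i' _ => hterm i')]
    rw [Finset.sum_ite_eq Finset.univ jf (fun i' => α i' • B (Sum.inr ⟨0, hn⟩))]
    simp
  have hpadB0 : B (Sum.inr ⟨0, hn⟩) = padB B 0 := by unfold padB; rw [dif_pos hn]
  have hval : ∀ l : ℕ, l < m1 + 1 → qcf B (Φ (padA B (l + (i:ℕ)))) l
      = if l = 0 then α i else 0 := by
    intro l hl
    by_cases hl0 : l = 0
    · subst hl0
      rw [if_pos rfl, padA_lt (show 0 + (i:ℕ) < m1 + 1 by omega)]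
      have hfin : (⟨0 + (i:ℕ), show 0 + (i:ℕ) < m1 + 1 by omega⟩ : Fin (m1+1)) = i := by
        ext; simp
      rw [hfin, hΦa i, qcf_smul, hpadB0, qcf_padB_self 0 (by omega), mul_one]
    · rw [if_neg hl0]
      by_cases hli : l + (i:ℕ) < m1 + 1
      · rw [padA_lt hli, hΦa _, qcf_smul, hpadB0, qcf_padB_zero 0 l (by omega), mul_zero]
      · rw [show padA B (l + (i:ℕ)) = 0 from dif_neg (by omega), map_zero, qcf_zero]
  have hsum1 : ∑ l ∈ Finset.range (m1+1), qcf B (Φ (padA B (l + (i:ℕ)))) l = α i := by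
    rw [Finset.sum_congr rfl (fun l hl => hval l (Finset.mem_range.mp hl))]
    rw [Finset.sum_ite_eq' (Finset.range (m1+1)) 0 (fun _ => α i)]
    simp
  have hsum2 : ∑ l ∈ Finset.range (m1+1), qcf B (Φ (padA B (l + (i:ℕ)))) l = 0 := by
    rw [Finset.sum_congr rfl (fun l hl => mainF l (Finset.mem_range.mp hl))]
    rw [Finset.sum_add_distrib]
    have e1 : ∑ l ∈ Finset.range (m1+1), pcf B (ψ (padB B (l + (i:ℕ) + 1))) l
        = ∑ l ∈ Finset.range m1, pcf B (ψ (padB B (l + (i:ℕ) + 1))) l := by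
      rw [Finset.sum_range_succ, padB_out (by omega), map_zero, pcf_zero, add_zero]
    have e2 : ∑ l ∈ Finset.range (m1+1),
          (if 1 ≤ l then pcf B (ψ (padB B (l + (i:ℕ)))) (l-1) else 0)
        = ∑ l ∈ Finset.range m1, pcf B (ψ (padB B (l + (i:ℕ) + 1))) l := by
      rw [Finset.sum_range_succ']
      rw [if_neg (by omega), add_zero]
      refine Finset.sum_congr rfl fun x _ => ?_
      rw [if_pos (by omega)]
      have hx1 : x + 1 + (i:ℕ) = x + (i:ℕ) + 1 := by omega
      rw [hx1, Nat.add_sub_cancel]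
    rw [e1, e2, CharTwo.add_self_eq_zero]
  rw [hsum1] at hsum2
  exact hsum2
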